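/- arXiv:1202.1376 — 2 statements merged into one kernel-verified Lean document; each statement's English description precedes it below -/
import Mathlib

section
/- For every n ≥ 1, the multiset of eigenvalues (with multiplicity) of the 2ⁿ×2ⁿ decoherence matrix D_{A₀^{(n)}} is {ρ_L^{(n)}, ρ_R^{(n)}} together with 0 with multiplicity 2ⁿ−2, where ρ_L^{(n)} = (1 + (p−q)^{n−1}(p₀−q₀))/2 and ρ_R^{(n)} = (1 − (p−q)^{n−1}(p₀−q₀))/2. -/
open Matrix Filter
open scoped BigOperators Classical

noncomputable section

/-- Index in `Fin 2` of a direction: `false` ↔ `-1` (index `0`), `true` ↔ `1` (index `1`). -/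
def bidx (b : Bool) : Fin 2 := if b then 1 else 0

/-- The standard basis vector `e_j`, `j ∈ {-1,1}`, of `ℂ²`. -/
def eVec (b : Bool) : Fin 2 → ℂ := fun i => if i = bidx b then 1 else 0

/-- The projection `e_j e_j†`. -/
def projC (b : Bool) : Matrix (Fin 2) (Fin 2) ℂ :=
  Matrix.single (bidx b) (bidx b) 1

/-- `P_j = e_j e_j† U`. -/
def pMat (U : Matrix (Fin 2) (Fin 2) ℂ) (b : Bool) : Matrix (Fin 2) (Fin 2) ℂ :=
  projC b * U

/-- The weight of a path `ξ = (ξ_n, …, ξ_1)` (here `ξ i` is step `i+1`):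
`w(ξ) = P_{ξ_n} ⋯ P_{ξ_1} φ₀`. -/
def weight (U : Matrix (Fin 2) (Fin 2) ℂ) (φ₀ : Fin 2 → ℂ) {n : ℕ} (ξ : Fin n → Bool) :
    Fin 2 → ℂ :=
  ((List.ofFn fun i => pMat U (ξ i)).reverse.prod).mulVec φ₀

/-- The complex inner product `⟨v, w⟩`, conjugate-linear in the first slot. -/
def cdot (v w : Fin 2 → ℂ) : ℂ := ∑ i, (starRingEnd ℂ) (v i) * w i

/-- The decoherence matrix restricted to a set `A` of pairs of paths. -/
def decMat (U : Matrix (Fin 2) (Fin 2) ℂ) (φ₀ : Fin 2 → ℂ) {n : ℕ}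
    (A : Set ((Fin n → Bool) × (Fin n → Bool))) :
    Matrix (Fin n → Bool) (Fin n → Bool) ℂ :=
  Matrix.of fun ξ η =>
    if (ξ, η) ∈ A then cdot (weight U φ₀ ξ) (weight U φ₀ η) else 0

/-- `ξ_1 + ⋯ + ξ_n ∈ ℤ`, each step being `±1`. -/
def pathSum {n : ℕ} (ξ : Fin n → Bool) : ℤ := ∑ i, (if ξ i then 1 else -1)

/-- `A₀^{(n)}`: pairs of paths with the same final direction (paths have length `n+1`). -/
def A0 (n : ℕ) : Set ((Fin (n+1) → Bool) × (Fin (n+1) → Bool)) :=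
  {x | x.1 (Fin.last n) = x.2 (Fin.last n)}

/-- `A_P^{(n)}`: pairs of paths with the same final direction and the same endpoint. -/
def AP (n : ℕ) : Set ((Fin (n+1) → Bool) × (Fin (n+1) → Bool)) :=
  {x | x.1 (Fin.last n) = x.2 (Fin.last n) ∧ pathSum x.1 = pathSum x.2}

/-- `A₁^{(n)}`: the diagonal pairs. -/
def A1 (n : ℕ) : Set ((Fin (n+1) → Bool) × (Fin (n+1) → Bool)) :=
  {x | x.1 = x.2}

/-- The von Neumann entropy `S(D) = −Σᵢ λᵢ log₂ λᵢ`, summing over the eigenvalues with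
multiplicity (the roots of the characteristic polynomial; they are real for a PSD Hermitian
matrix), with the convention `0 · log₂ 0 = 0`. -/
def vnEntropy {I : Type*} [Fintype I] [DecidableEq I] (D : Matrix I I ℂ) : ℝ :=
  -((D.charpoly.roots).map fun lam => lam.re * Real.logb 2 lam.re).sum

/-- The real projection `e_j e_j†`. -/
def projR (b : Bool) : Matrix (Fin 2) (Fin 2) ℝ :=
  Matrix.single (bidx b) (bidx b) 1

/-- The stochastic matrix `M = [[p, q], [q, p]]` of the correlated random walk, `q = 1 − p`. -/
def rwM (p : ℝ) : Matrix (Fin 2) (Fin 2) ℝ := !![p, 1-p; 1-p, p]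

/-- The initial vector `φ = (q₀, p₀)ᵀ` of the correlated random walk, `q₀ = 1 − p₀`. -/
def rwφ (p₀ : ℝ) : Fin 2 → ℝ := ![1 - p₀, p₀]

/-- `P̃_{ξ_n} ⋯ P̃_{ξ_2} φ_{ξ_1}`, where `P̃_j = e_j e_j† M` and `φ_j = e_j e_j† φ`. -/
def rwVec (p p₀ : ℝ) : {n : ℕ} → (Fin n → Bool) → (Fin 2 → ℝ)
  | 0, _ => rwφ p₀
  | n + 1, ξ =>
      ((List.ofFn fun i : Fin n => projR (ξ i.succ) * rwM p).reverse.prod).mulVec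
        ((projR (ξ 0)).mulVec (rwφ p₀))

/-- `p_L^{(n)}(j)`: the probability that the `(p₀,p)`-correlated random walk is at `j`
at time `n`, having arrived from the left. -/
def pL (p p₀ : ℝ) (n : ℕ) (j : ℤ) : ℝ :=
  ∑ ξ ∈ Finset.univ.filter (fun ξ : Fin n → Bool => pathSum ξ = j), rwVec p p₀ ξ 0

/-- `p_R^{(n)}(j)`: the probability that the `(p₀,p)`-correlated random walk is at `j`
at time `n`, having arrived from the right. -/
def pR (p p₀ : ℝ) (n : ℕ) (j : ℤ) : ℝ :=
  ∑ ξ ∈ Finset.univ.filter (fun ξ : Fin n → Bool => pathSum ξ = j), rwVec p p₀ ξ 1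

section Aux

open Polynomial

lemma charmatrix_map_frac {J : Type*} [Fintype J] [DecidableEq J]
    (φ : Polynomial ℂ →+* FractionRing (Polynomial ℂ)) (M : Matrix J J ℂ) :
    (charmatrix M).map φ = φ X • (1 : Matrix J J (FractionRing (Polynomial ℂ)))
      - M.map (φ.comp (C : ℂ →+* Polynomial ℂ)) := by
  ext i j
  by_cases h : i = j <;>
    simp [charmatrix_apply, h, Matrix.one_apply, diagonal_apply, Matrix.sub_apply, Matrix.smul_apply]

lemma charpoly_map_frac {J : Type*} [Fintype J] [DecidableEq J] (M : Matrix J J ℂ) :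
    (algebraMap (Polynomial ℂ) (FractionRing (Polynomial ℂ))) M.charpoly
      = det ((algebraMap (Polynomial ℂ) (FractionRing (Polynomial ℂ))) X
          • (1 : Matrix J J (FractionRing (Polynomial ℂ)))
        - M.map ((algebraMap (Polynomial ℂ) (FractionRing (Polynomial ℂ))).comp
            (C : ℂ →+* Polynomial ℂ))) := by
  rw [Matrix.charpoly, RingHom.map_det, RingHom.mapMatrix_apply, charmatrix_map_frac]

lemma det_smul_one_sub {J : Type*} [Fintype J] [DecidableEq J]
    {x : FractionRing (Polynomial ℂ)} (hx : x ≠ 0)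
    (M : Matrix J J (FractionRing (Polynomial ℂ))) :
    det (x • (1 : Matrix J J (FractionRing (Polynomial ℂ))) - M)
      = x ^ (Fintype.card J) * det (1 - x⁻¹ • M) := by
  have : x • (1 : Matrix J J (FractionRing (Polynomial ℂ))) - M
      = x • ((1 : Matrix J J (FractionRing (Polynomial ℂ))) - x⁻¹ • M) := by
    rw [smul_sub, smul_smul, mul_inv_cancel₀ hx, one_smul]
  rw [this, Matrix.det_smul]

lemma charpoly_mul_comm_pow {I K : Type*} [Fintype I] [Fintype K] [DecidableEq I] [DecidableEq K]
    (A : Matrix I K ℂ) (B : Matrix K I ℂ) :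
    (A * B).charpoly * X ^ (Fintype.card K) = (B * A).charpoly * X ^ (Fintype.card I) := by
  set F := FractionRing (Polynomial ℂ)
  set φ : Polynomial ℂ →+* F := algebraMap (Polynomial ℂ) F with hφ
  have hinj : Function.Injective φ := IsFractionRing.injective _ _
  apply hinj
  have hx : φ X ≠ 0 := by
    intro h
    exact X_ne_zero (hinj (h.trans (map_zero φ).symm))
  set ψ : ℂ →+* F := φ.comp (C : ℂ →+* Polynomial ℂ) with hψ
  have hAB : (A * B).map ψ = A.map ψ * B.map ψ := Matrix.map_mul
  have hBA : (B * A).map ψ = B.map ψ * A.map ψ := Matrix.map_mul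
  rw [_root_.map_mul, _root_.map_mul, map_pow, map_pow, charpoly_map_frac (A * B),
    charpoly_map_frac (B * A), ← hφ, ← hψ, hAB, hBA, det_smul_one_sub hx, det_smul_one_sub hx]
  have h1 : (1 : Matrix I I F) - (φ X)⁻¹ • (A.map ψ * B.map ψ)
      = 1 - ((φ X)⁻¹ • A.map ψ) * B.map ψ := by rw [Matrix.smul_mul]
  have h2 : (1 : Matrix K K F) - (φ X)⁻¹ • (B.map ψ * A.map ψ)
      = 1 - B.map ψ * ((φ X)⁻¹ • A.map ψ) := by rw [Matrix.mul_smul]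
  rw [h1, h2, Matrix.det_one_sub_mul_comm]
  ring

lemma charpoly_diagonal' {I : Type*} [Fintype I] [DecidableEq I] (d : I → ℂ) :
    (Matrix.diagonal d).charpoly = ∏ i, (X - C (d i)) := by
  have h : charmatrix (Matrix.diagonal d) = Matrix.diagonal (fun i => X - C (d i)) := by
    ext i j
    by_cases h : i = j <;> simp [charmatrix_apply, diagonal_apply, h]
  rw [Matrix.charpoly, h, det_diagonal]

lemma weight_zero (U : Matrix (Fin 2) (Fin 2) ℂ) (φ : Fin 2 → ℂ) (ξ : Fin 0 → Bool) :
    weight U φ ξ = φ := by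
  simp [weight]

lemma weight_cons (U : Matrix (Fin 2) (Fin 2) ℂ) (φ : Fin 2 → ℂ) {n : ℕ}
    (ξ : Fin (n + 1) → Bool) :
    weight U φ ξ = weight U ((pMat U (ξ 0)).mulVec φ) (fun i : Fin n => ξ i.succ) := by
  unfold weight
  rw [List.ofFn_succ, List.reverse_cons, List.prod_append, List.prod_singleton,
    ← Matrix.mulVec_mulVec]

lemma weight_snoc (U : Matrix (Fin 2) (Fin 2) ℂ) (φ : Fin 2 → ℂ) {n : ℕ}
    (ξ : Fin (n + 1) → Bool) :
    weight U φ ξ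
      = (pMat U (ξ (Fin.last n))).mulVec (weight U φ (fun i : Fin n => ξ i.castSucc)) := by
  unfold weight
  rw [List.ofFn_succ', List.concat_eq_append, List.reverse_append, List.reverse_singleton,
    List.singleton_append, List.prod_cons, ← Matrix.mulVec_mulVec]

lemma pMat_mulVec (U : Matrix (Fin 2) (Fin 2) ℂ) (b : Bool) (ψ : Fin 2 → ℂ) :
    (pMat U b).mulVec ψ = (U.mulVec ψ (bidx b)) • eVec b := by
  funext i
  simp only [pMat, ← Matrix.mulVec_mulVec, projC]
  rcases b with _ | _ <;> fin_cases i <;>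
    simp [Matrix.mulVec, dotProduct, Fin.sum_univ_two, eVec, bidx,
      Matrix.single]

lemma cdot_smul_eVec (c c' : ℂ) (b b' : Bool) :
    cdot (c • eVec b) (c' • eVec b') = if b = b' then (starRingEnd ℂ) c * c' else 0 := by
  rcases b with _ | _ <;> rcases b' with _ | _ <;>
    simp [cdot, eVec, bidx, Fin.sum_univ_two]

lemma weight_supp (U : Matrix (Fin 2) (Fin 2) ℂ) (φ : Fin 2 → ℂ) {n : ℕ}
    (ξ : Fin (n + 1) → Bool) :
    weight U φ ξ = (weight U φ ξ (bidx (ξ (Fin.last n)))) • eVec (ξ (Fin.last n)) := by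
  rw [weight_snoc, pMat_mulVec]
  simp [eVec]

lemma cdot_weight (U : Matrix (Fin 2) (Fin 2) ℂ) (φ : Fin 2 → ℂ) {n : ℕ}
    (ξ η : Fin (n + 1) → Bool) :
    cdot (weight U φ ξ) (weight U φ η)
      = if ξ (Fin.last n) = η (Fin.last n) then
          (starRingEnd ℂ) (weight U φ ξ (bidx (ξ (Fin.last n))))
            * (weight U φ η (bidx (η (Fin.last n)))) else 0 := by
  conv_lhs => rw [weight_supp U φ ξ, weight_supp U φ η]
  rw [cdot_smul_eVec]

lemma gsum (a b c d : ℂ) (P Q : ℂ)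
    (hPa : (starRingEnd ℂ) a * a = P) (hPb : (starRingEnd ℂ) b * b = Q)
    (hPc : (starRingEnd ℂ) c * c = Q) (hPd : (starRingEnd ℂ) d * d = P)
    (hPQ : P + Q = 1) :
    ∀ (m : ℕ) (ψ : Fin 2 → ℂ) (β : Bool),
    (∑ ξ : Fin (m+1) → Bool,
      if ξ (Fin.last m) = β then cdot (weight !![a,b;c,d] ψ ξ) (weight !![a,b;c,d] ψ ξ) else 0)
    = (((starRingEnd ℂ) ((!![a,b;c,d]).mulVec ψ 0) * ((!![a,b;c,d]).mulVec ψ 0)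
        + (starRingEnd ℂ) ((!![a,b;c,d]).mulVec ψ 1) * ((!![a,b;c,d]).mulVec ψ 1))
      + (P - Q)^m *
        (if β then
          (starRingEnd ℂ) ((!![a,b;c,d]).mulVec ψ 1) * ((!![a,b;c,d]).mulVec ψ 1)
            - (starRingEnd ℂ) ((!![a,b;c,d]).mulVec ψ 0) * ((!![a,b;c,d]).mulVec ψ 0)
        else
          (starRingEnd ℂ) ((!![a,b;c,d]).mulVec ψ 0) * ((!![a,b;c,d]).mulVec ψ 0)
            - (starRingEnd ℂ) ((!![a,b;c,d]).mulVec ψ 1) * ((!![a,b;c,d]).mulVec ψ 1))) / 2 := by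
  set U := !![a,b;c,d] with hUdef
  intro m
  induction m with
  | zero =>
    intro ψ β
    rw [← (Equiv.funUnique (Fin 1) Bool).symm.sum_comp]
    rw [Fintype.sum_bool]
    have hw : ∀ x : Bool, weight U ψ ((Equiv.funUnique (Fin 1) Bool).symm x)
        = (U.mulVec ψ (bidx x)) • eVec x := by
      intro x
      rw [weight_cons, weight_zero, pMat_mulVec]
      rfl
    have hlast : ∀ x : Bool,
        ((Equiv.funUnique (Fin 1) Bool).symm x) (Fin.last 0) = x := fun x => rfl
    rw [hw, hw, hlast, hlast, cdot_smul_eVec, cdot_smul_eVec]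
    rcases β with _ | _ <;> simp [bidx] <;> ring
  | succ m ih =>
    intro ψ β
    rw [← (Fin.consEquiv (fun _ : Fin (m+2) => Bool)).sum_comp]
    rw [Fintype.sum_prod_type]
    have hsplit : ∀ (b' : Bool) (ξ' : Fin (m+1) → Bool),
        (if (Fin.consEquiv (fun _ : Fin (m+2) => Bool)) (b', ξ') (Fin.last (m+1)) = β then
          cdot (weight U ψ ((Fin.consEquiv (fun _ : Fin (m+2) => Bool)) (b', ξ')))
            (weight U ψ ((Fin.consEquiv (fun _ : Fin (m+2) => Bool)) (b', ξ'))) else 0)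
        = (if ξ' (Fin.last m) = β then
            cdot (weight U ((pMat U b').mulVec ψ) ξ')
              (weight U ((pMat U b').mulVec ψ) ξ') else 0) := by
      intro b' ξ'
      have h1 : (Fin.consEquiv (fun _ : Fin (m+2) => Bool)) (b', ξ') (Fin.last (m+1))
          = ξ' (Fin.last m) := by
        simp [Fin.consEquiv, ← Fin.succ_last, Fin.cons_succ]
      have h2 : weight U ψ ((Fin.consEquiv (fun _ : Fin (m+2) => Bool)) (b', ξ'))
          = weight U ((pMat U b').mulVec ψ) ξ' := by
        rw [weight_cons]
        simp [Fin.consEquiv, Fin.cons_succ, Fin.cons_zero]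
      rw [h1, h2]
    simp only [hsplit]
    rw [Fintype.sum_bool]
    rw [ih, ih]
    have hcol : ∀ (b' : Bool) (j : Fin 2),
        U.mulVec ((pMat U b').mulVec ψ) j = (U.mulVec ψ (bidx b')) * U j (bidx b') := by
      intro b' j
      rw [pMat_mulVec]
      rcases b' with _ | _ <;> fin_cases j <;>
        · simp [Matrix.mulVec, dotProduct, Fin.sum_univ_two, eVec, bidx,
            Pi.smul_apply, smul_eq_mul]
          ring
    simp only [hcol]
    have he : ∀ (j : Fin 2) (b' : Bool), (starRingEnd ℂ) (U j (bidx b')) * (U j (bidx b'))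
        = if j = bidx b' then P else Q := by
      intro j b'
      rcases b' with _ | _ <;> fin_cases j <;>
        simp [hUdef, bidx, hPa, hPb, hPc, hPd]
    simp only [_root_.map_mul]
    have expand : ∀ (j : Fin 2) (b' : Bool),
        ((starRingEnd ℂ) (U.mulVec ψ (bidx b')) * (starRingEnd ℂ) (U j (bidx b')))
          * (U.mulVec ψ (bidx b') * U j (bidx b'))
        = ((starRingEnd ℂ) (U.mulVec ψ (bidx b')) * (U.mulVec ψ (bidx b')))
          * (if j = bidx b' then P else Q) := by
      intro j b'
      rw [← he j b']
      ring
    simp only [expand]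
    have hb0 : bidx false = 0 := rfl
    have hb1 : bidx true = 1 := rfl
    rcases β with _ | _ <;>
      · simp only [if_true, if_false, hb0, hb1, Bool.false_eq_true, reduceIte,
          Fin.isValue, show (0 : Fin 2) ≠ 1 by decide, show (1 : Fin 2) ≠ 0 by decide,
          pow_succ]
        have h1 : Q = 1 - P := by linear_combination hPQ
        rw [h1]
        ring

lemma conj_mul_self_eq (z : ℂ) :
    (starRingEnd ℂ) z * z = ((‖z‖ ^ 2 : ℝ) : ℂ) := by
  rw [Complex.sq_norm, Complex.normSq_eq_conj_mul_self]

end Aux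

/-- the eigenvalues (with multiplicity) of `D_{A₀}` for paths of length `n+1`
are `ρ_L = (1 + (p−q)^n(p₀−q₀))/2`, `ρ_R = (1 − (p−q)^n(p₀−q₀))/2` and `0` with
multiplicity `2^{n+1} − 2`. -/


theorem spec_decMat_A0
    (a b c d α β : ℂ)
    (hU : !![a, b; c, d] ∈ Matrix.unitaryGroup (Fin 2) ℂ)
    (habcd : a * b * c * d ≠ 0)
    (hφ : ‖α‖ ^ 2 + ‖β‖ ^ 2 = 1)
    (p q p₀ q₀ : ℝ)
    (hp : p = ‖a‖ ^ 2) (hq : q = 1 - p)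
    (hp₀ : p₀ = ‖c * α + d * β‖ ^ 2) (hq₀ : q₀ = 1 - p₀)
    (n : ℕ) :
    (decMat !![a, b; c, d] ![α, β] (A0 n)).charpoly.roots =
      {(((1 + (p - q) ^ n * (p₀ - q₀)) / 2 : ℝ) : ℂ),
        (((1 - (p - q) ^ n * (p₀ - q₀)) / 2 : ℝ) : ℂ)} +
      Multiset.replicate (2 ^ (n + 1) - 2) 0 := by
  subst hq
  subst hq₀
  -- unitarity facts
  have hstar : star (!![a, b; c, d]) * (!![a, b; c, d]) = 1 :=
    Matrix.mem_unitaryGroup_iff'.mp hU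
  have hstar' : (!![a, b; c, d]) * star (!![a, b; c, d]) = 1 :=
    Matrix.mem_unitaryGroup_iff.mp hU
  have E1 : (starRingEnd ℂ) a * a + (starRingEnd ℂ) c * c = 1 := by
    have h := congrFun (congrFun hstar 0) 0
    simpa [Matrix.mul_apply, Fin.sum_univ_two, Matrix.conjTranspose_apply,
      Matrix.one_apply] using h
  have E2 : (starRingEnd ℂ) b * b + (starRingEnd ℂ) d * d = 1 := by
    have h := congrFun (congrFun hstar 1) 1
    simpa [Matrix.mul_apply, Fin.sum_univ_two, Matrix.conjTranspose_apply,
      Matrix.one_apply] using h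
  have E3 : (starRingEnd ℂ) a * b + (starRingEnd ℂ) c * d = 0 := by
    have h := congrFun (congrFun hstar 0) 1
    simpa [Matrix.mul_apply, Fin.sum_univ_two, Matrix.conjTranspose_apply,
      Matrix.one_apply] using h
  have E4 : (starRingEnd ℂ) b * a + (starRingEnd ℂ) d * c = 0 := by
    have h := congrFun (congrFun hstar 1) 0
    simpa [Matrix.mul_apply, Fin.sum_univ_two, Matrix.conjTranspose_apply,
      Matrix.one_apply] using h
  have F1 : a * (starRingEnd ℂ) a + b * (starRingEnd ℂ) b = 1 := by
    have h := congrFun (congrFun hstar' 0) 0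
    simpa [Matrix.mul_apply, Fin.sum_univ_two, Matrix.conjTranspose_apply,
      Matrix.one_apply] using h
  have hPa : (starRingEnd ℂ) a * a = ((p : ℝ) : ℂ) := by
    rw [conj_mul_self_eq, hp]
  have hPb : (starRingEnd ℂ) b * b = 1 - ((p : ℝ) : ℂ) := by
    linear_combination F1 - hPa
  have hPc : (starRingEnd ℂ) c * c = 1 - ((p : ℝ) : ℂ) := by
    linear_combination E1 - hPa
  have hPd : (starRingEnd ℂ) d * d = ((p : ℝ) : ℂ) := by
    linear_combination E2 - hPb
  -- the two nonzero eigenvalues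
  have hv1 : (starRingEnd ℂ) (c * α + d * β) * (c * α + d * β) = ((p₀ : ℝ) : ℂ) := by
    rw [conj_mul_self_eq, hp₀]
  have hφ1 : (starRingEnd ℂ) α * α + (starRingEnd ℂ) β * β = 1 := by
    rw [conj_mul_self_eq, conj_mul_self_eq]
    exact_mod_cast congrArg (fun x : ℝ => (x : ℂ)) hφ
  have hv0 : (starRingEnd ℂ) (a * α + b * β) * (a * α + b * β) = 1 - ((p₀ : ℝ) : ℂ) := by
    have expand : (starRingEnd ℂ) (a * α + b * β) * (a * α + b * β)
        + (starRingEnd ℂ) (c * α + d * β) * (c * α + d * β) = 1 := by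
      simp only [map_add, _root_.map_mul]
      linear_combination ((starRingEnd ℂ) α * α) * E1 + ((starRingEnd ℂ) β * β) * E2
        + ((starRingEnd ℂ) α * β) * E3 + ((starRingEnd ℂ) β * α) * E4 + hφ1
    linear_combination expand - hv1
  have hmv0 : (!![a, b; c, d]).mulVec ![α, β] 0 = a * α + b * β := by
    simp [Matrix.mulVec, dotProduct, Fin.sum_univ_two]
  have hmv1 : (!![a, b; c, d]).mulVec ![α, β] 1 = c * α + d * β := by
    simp [Matrix.mulVec, dotProduct, Fin.sum_univ_two]
  -- closed form of the diagonal sums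
  have hSval : ∀ β' : Bool,
      (∑ ξ : Fin (n+1) → Bool, if ξ (Fin.last n) = β' then
        cdot (weight !![a, b; c, d] ![α, β] ξ) (weight !![a, b; c, d] ![α, β] ξ) else 0)
      = if β' then (((1 + (p - (1 - p)) ^ n * (p₀ - (1 - p₀))) / 2 : ℝ) : ℂ)
        else (((1 - (p - (1 - p)) ^ n * (p₀ - (1 - p₀))) / 2 : ℝ) : ℂ) := by
    intro β'
    rw [gsum a b c d ((p : ℝ) : ℂ) (1 - ((p : ℝ) : ℂ)) hPa hPb hPc hPd (by ring) n ![α, β] β']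
    rw [hmv0, hmv1, hv0, hv1]
    rcases β' with _ | _ <;>
      · simp only [if_true, if_false, Bool.false_eq_true, reduceIte]
        push_cast
        ring
  -- index elements
  have hne : (fun _ : Fin (n+1) => false) ≠ (fun _ : Fin (n+1) => true) := by
    intro h
    simpa using congrFun h 0
  set i₀ : Fin (n+1) → Bool := fun _ => false with hi₀
  set i₁ : Fin (n+1) → Bool := fun _ => true with hi₁
  set ρT : ℂ := (((1 + (p - (1 - p)) ^ n * (p₀ - (1 - p₀))) / 2 : ℝ) : ℂ) with hρT
  set ρF : ℂ := (((1 - (p - (1 - p)) ^ n * (p₀ - (1 - p₀))) / 2 : ℝ) : ℂ) with hρF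
  set uu : Bool → (Fin (n+1) → Bool) → ℂ := fun bb ξ =>
    if ξ (Fin.last n) = bb then weight !![a, b; c, d] ![α, β] ξ (bidx bb) else 0 with huu
  set CC : Matrix (Fin (n+1) → Bool) (Fin (n+1) → Bool) ℂ :=
    Matrix.of (fun ξ k => if k = i₀ then (starRingEnd ℂ) (uu false ξ)
      else if k = i₁ then (starRingEnd ℂ) (uu true ξ) else 0) with hCC
  set RR : Matrix (Fin (n+1) → Bool) (Fin (n+1) → Bool) ℂ :=
    Matrix.of (fun k η => if k = i₀ then uu false η
      else if k = i₁ then uu true η else 0) with hRR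
  have hD : decMat !![a, b; c, d] ![α, β] (A0 n) = CC * RR := by
    ext ξ η
    rw [Matrix.mul_apply]
    have hterm : ∀ k, CC ξ k * RR k η =
        (if k = i₀ then (starRingEnd ℂ) (uu false ξ) * uu false η else 0)
          + (if k = i₁ then (starRingEnd ℂ) (uu true ξ) * uu true η else 0) := by
      intro k
      by_cases h0 : k = i₀
      · have h1 : ¬ (k = i₁) := by rw [h0]; exact hne
        simp [hCC, hRR, h0, h1, hne, Ne.symm hne]
      · by_cases h1 : k = i₁ <;> simp [hCC, hRR, h0, h1, hne, Ne.symm hne]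
    rw [Finset.sum_congr rfl (fun k _ => hterm k), Finset.sum_add_distrib,
      Finset.sum_ite_eq' Finset.univ i₀, Finset.sum_ite_eq' Finset.univ i₁]
    simp only [Finset.mem_univ, if_true]
    by_cases hA : ξ (Fin.last n) = η (Fin.last n)
    · rw [show decMat !![a, b; c, d] ![α, β] (A0 n) ξ η
          = cdot (weight !![a, b; c, d] ![α, β] ξ) (weight !![a, b; c, d] ![α, β] η) from
        if_pos (show (ξ, η) ∈ A0 n from hA), cdot_weight, if_pos hA]
      cases hb : ξ (Fin.last n) with
      | false =>
        have hb' : η (Fin.last n) = false := (hA.symm.trans hb)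
        simp [huu, hb, hb']
      | true =>
        have hb' : η (Fin.last n) = true := (hA.symm.trans hb)
        simp [huu, hb, hb']
    · rw [show decMat !![a, b; c, d] ![α, β] (A0 n) ξ η = 0 from
        if_neg (show (ξ, η) ∉ A0 n from hA)]
      cases hb : ξ (Fin.last n) <;> cases hb' : η (Fin.last n) <;>
        first
          | exact absurd (hb.trans hb'.symm) hA
          | simp [huu, hb, hb']
  have hsum_diag : ∀ bb : Bool,
      (∑ η : Fin (n+1) → Bool, uu bb η * (starRingEnd ℂ) (uu bb η))
        = if bb then ρT else ρF := by
    intro bb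
    have h := hSval bb
    rw [hρT, hρF] at *
    rw [← h]
    apply Finset.sum_congr rfl
    intro η _
    by_cases hη : η (Fin.last n) = bb
    · rw [if_pos hη, cdot_weight, if_pos rfl, hη]
      simp only [huu]
      rw [if_pos hη]
      ring
    · simp [huu, hη]
  have hsum_off : ∀ bb bb' : Bool, bb ≠ bb' →
      (∑ η : Fin (n+1) → Bool, uu bb η * (starRingEnd ℂ) (uu bb' η)) = 0 := by
    intro bb bb' hbb
    apply Finset.sum_eq_zero
    intro η _
    by_cases hη : η (Fin.last n) = bb
    · have h2 : η (Fin.last n) ≠ bb' := by rw [hη]; exact hbb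
      simp [huu, hη, h2, hbb]
    · simp [huu, hη]
  set dv : (Fin (n+1) → Bool) → ℂ :=
    fun k => if k = i₀ then ρF else if k = i₁ then ρT else 0 with hdv
  have hdiag : RR * CC = Matrix.diagonal dv := by
    ext k l
    rw [Matrix.mul_apply, Matrix.diagonal_apply]
    rcases eq_or_ne k i₀ with hk0 | hk0
    · subst hk0
      rcases eq_or_ne l i₀ with hl0 | hl0
      · subst hl0
        have h : (∑ η : Fin (n+1) → Bool, RR i₀ η * CC η i₀)
            = ∑ η : Fin (n+1) → Bool, uu false η * (starRingEnd ℂ) (uu false η) := by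
          apply Finset.sum_congr rfl
          intro η _
          simp [hRR, hCC]
        rw [h, hsum_diag false]
        simp [hdv]
      · rcases eq_or_ne l i₁ with hl1 | hl1
        · subst hl1
          have h : (∑ η : Fin (n+1) → Bool, RR i₀ η * CC η i₁)
              = ∑ η : Fin (n+1) → Bool, uu false η * (starRingEnd ℂ) (uu true η) := by
            apply Finset.sum_congr rfl
            intro η _
            simp [hRR, hCC, Ne.symm hne]
          rw [h, hsum_off false true (by decide)]
          simp [Ne.symm hl0]
        · have h : (∑ η : Fin (n+1) → Bool, RR i₀ η * CC η l) = 0 := by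
            apply Finset.sum_eq_zero
            intro η _
            simp [hCC, hl0, hl1]
          rw [h]
          simp [Ne.symm hl0]
    · rcases eq_or_ne k i₁ with hk1 | hk1
      · subst hk1
        rcases eq_or_ne l i₀ with hl0 | hl0
        · subst hl0
          have h : (∑ η : Fin (n+1) → Bool, RR i₁ η * CC η i₀)
              = ∑ η : Fin (n+1) → Bool, uu true η * (starRingEnd ℂ) (uu false η) := by
            apply Finset.sum_congr rfl
            intro η _
            simp [hRR, hCC, Ne.symm hne]
          rw [h, hsum_off true false (by decide)]
          simp [Ne.symm hne]
        · rcases eq_or_ne l i₁ with hl1 | hl1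
          · subst hl1
            have h : (∑ η : Fin (n+1) → Bool, RR i₁ η * CC η i₁)
                = ∑ η : Fin (n+1) → Bool, uu true η * (starRingEnd ℂ) (uu true η) := by
              apply Finset.sum_congr rfl
              intro η _
              simp [hRR, hCC, Ne.symm hne]
            rw [h, hsum_diag true]
            simp [hdv, Ne.symm hne]
          · have h : (∑ η : Fin (n+1) → Bool, RR i₁ η * CC η l) = 0 := by
              apply Finset.sum_eq_zero
              intro η _
              simp [hCC, hl0, hl1]
            rw [h]
            simp [Ne.symm hl1]
      · have h : (∑ η : Fin (n+1) → Bool, RR k η * CC η l) = 0 := by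
          apply Finset.sum_eq_zero
          intro η _
          simp [hRR, hk0, hk1]
        rw [h]
        rcases eq_or_ne k l with hkl | hkl
        · subst hkl
          simp [hdv, hk0, hk1]
        · simp [hkl]
  have hcardI : Fintype.card (Fin (n+1) → Bool) = 2 ^ (n+1) := by
    simp [Fintype.card_fun]
  have hcharp : (decMat !![a, b; c, d] ![α, β] (A0 n)).charpoly
      = (Matrix.diagonal dv).charpoly := by
    have h := charpoly_mul_comm_pow CC RR
    rw [hdiag] at h
    rw [hD]
    exact mul_right_cancel₀ (pow_ne_zero _ Polynomial.X_ne_zero) h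
  rw [hcharp, charpoly_diagonal', Finset.prod_eq_multiset_prod]
  have hmm : (Multiset.map (fun i => Polynomial.X - Polynomial.C (dv i))
        (Finset.univ : Finset (Fin (n+1) → Bool)).val)
      = Multiset.map (fun r => Polynomial.X - Polynomial.C r)
          ((Finset.univ : Finset (Fin (n+1) → Bool)).val.map dv) := by
    rw [Multiset.map_map]
    rfl
  rw [hmm, Polynomial.roots_multiset_prod_X_sub_C]
  -- multiset endgame
  have hnodup := (Finset.univ : Finset (Fin (n+1) → Bool)).nodup
  have h0mem : i₀ ∈ (Finset.univ : Finset (Fin (n+1) → Bool)).val :=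
    Finset.mem_val.mpr (Finset.mem_univ _)
  set m₁ := (Finset.univ : Finset (Fin (n+1) → Bool)).val.erase i₀ with hm₁
  have hu1 : (Finset.univ : Finset (Fin (n+1) → Bool)).val = i₀ ::ₘ m₁ :=
    (Multiset.cons_erase h0mem).symm
  have h1mem : i₁ ∈ m₁ :=
    (Multiset.mem_erase_of_ne (Ne.symm hne)).mpr (Finset.mem_val.mpr (Finset.mem_univ _))
  set m₂ := m₁.erase i₁ with hm₂
  have hu2 : m₁ = i₁ ::ₘ m₂ := (Multiset.cons_erase h1mem).symm
  have hm₁nd : m₁.Nodup := hnodup.erase _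
  have hzero : ∀ x ∈ m₂, dv x = 0 := by
    intro x hx
    have hx1 := (hm₁nd.mem_erase_iff).mp hx
    have hx0 : x ≠ i₀ := ((hnodup.mem_erase_iff).mp (hm₁ ▸ hx1.2)).1
    simp [hdv, hx0, hx1.1]
  have hc : Multiset.card (Finset.univ : Finset (Fin (n+1) → Bool)).val = 2 ^ (n+1) := by
    rw [← Finset.card_def, Finset.card_univ, hcardI]
  have hmap2 : m₂.map dv = Multiset.replicate (2 ^ (n+1) - 2) 0 := by
    rw [Multiset.eq_replicate]
    constructor
    · rw [Multiset.card_map, hm₂, Multiset.card_erase_of_mem h1mem, hm₁,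
        Multiset.card_erase_of_mem h0mem, hc]
      simp only [Nat.pred_eq_sub_one]
      omega
    · intro bb hbb
      obtain ⟨x, hx, rfl⟩ := Multiset.mem_map.mp hbb
      exact hzero x hx
  rw [hu1, hu2, Multiset.map_cons, Multiset.map_cons, hmap2]
  have hdv0 : dv i₀ = ρF := by simp [hdv]
  have hdv1 : dv i₁ = ρT := by simp [hdv, Ne.symm hne]
  rw [hdv0, hdv1]
  simp only [Multiset.insert_eq_cons, Multiset.cons_add, zero_add]
  exact Multiset.cons_swap _ _ _
end
end

section
/- Fix n ≥ 1 and j ∈ ℤ with |j| ≤ n and n ≡ j (mod 2), and let m = C(n,(n+j)/2) ≥ 2 be the number of paths ξ ∈ Ω_n with ξ_1+…+ξ_n = j. Then the multiset of eigenvalues (with multiplicity) of the m×m matrix D_{A_P^{(n,j)}}, i.e. the submatrix of the decoherence matrix indexed by the paths with sum j, is {p_L^{(n)}(j), p_R^{(n)}(j)} together with 0 with multiplicity m−2. -/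
open Matrix Filter
open scoped BigOperators Classical

noncomputable section

/-! ### Auxiliary lemmas -/

lemma bidx_injective : Function.Injective bidx := by
  intro x y h
  cases x <;> cases y <;> simp [bidx] at h ⊢

lemma projC_mul_mulVec (M : Matrix (Fin 2) (Fin 2) ℂ) (b : Bool) (v : Fin 2 → ℂ) :
    (projC b * M).mulVec v = fun i => if i = bidx b then (M.mulVec v) (bidx b) else 0 := by
  funext i
  rw [← Matrix.mulVec_mulVec]
  cases b <;> fin_cases i <;>
    simp [projC, bidx, Matrix.mulVec, dotProduct, Fin.sum_univ_two,
      Matrix.single_apply_of_ne, Matrix.single_apply_same]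

lemma projR_mul_mulVec (M : Matrix (Fin 2) (Fin 2) ℝ) (b : Bool) (v : Fin 2 → ℝ) :
    (projR b * M).mulVec v = fun i => if i = bidx b then (M.mulVec v) (bidx b) else 0 := by
  funext i
  rw [← Matrix.mulVec_mulVec]
  cases b <;> fin_cases i <;>
    simp [projR, bidx, Matrix.mulVec, dotProduct, Fin.sum_univ_two]

lemma projR_mulVec (b : Bool) (v : Fin 2 → ℝ) :
    (projR b).mulVec v = fun i => if i = bidx b then v (bidx b) else 0 := by
  have := projR_mul_mulVec 1 b v
  simpa using this

lemma mulVec_ind (M : Matrix (Fin 2) (Fin 2) ℂ) (b₀ : Bool) (z : ℂ) :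
    M.mulVec (fun i => if i = bidx b₀ then z else 0) = fun i => M i (bidx b₀) * z := by
  funext i
  cases b₀ <;>
    simp [Matrix.mulVec, dotProduct, Fin.sum_univ_two, bidx]

lemma mulVec_indR (M : Matrix (Fin 2) (Fin 2) ℝ) (b₀ : Bool) (z : ℝ) :
    M.mulVec (fun i => if i = bidx b₀ then z else 0) = fun i => M i (bidx b₀) * z := by
  funext i
  cases b₀ <;>
    simp [Matrix.mulVec, dotProduct, Fin.sum_univ_two, bidx]

lemma weight_one (U : Matrix (Fin 2) (Fin 2) ℂ) (φ₀ : Fin 2 → ℂ) (ξ : Fin 1 → Bool) :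
    weight U φ₀ ξ = (pMat U (ξ 0)).mulVec φ₀ := by
  simp [weight, List.ofFn_succ]

lemma weight_succ (U : Matrix (Fin 2) (Fin 2) ℂ) (φ₀ : Fin 2 → ℂ) {n : ℕ}
    (ξ : Fin (n+2) → Bool) :
    weight U φ₀ ξ = (pMat U (ξ (Fin.last (n+1)))).mulVec (weight U φ₀ (ξ ∘ Fin.castSucc)) := by
  rw [weight, weight, List.ofFn_succ' (f := fun i => pMat U (ξ i)), List.concat_eq_append,
    List.reverse_append, List.reverse_cons, List.reverse_nil, List.nil_append,
    List.singleton_append, List.prod_cons, ← Matrix.mulVec_mulVec]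
  rfl

lemma rwVec_one (p p₀ : ℝ) (ξ : Fin 1 → Bool) :
    rwVec p p₀ ξ = (projR (ξ 0)).mulVec (rwφ p₀) := by
  simp [rwVec]

lemma rwVec_succ (p p₀ : ℝ) {n : ℕ} (ξ : Fin (n+2) → Bool) :
    rwVec p p₀ ξ
      = (projR (ξ (Fin.last (n+1))) * rwM p).mulVec (rwVec p p₀ (ξ ∘ Fin.castSucc)) := by
  show ((List.ofFn fun i : Fin (n+1) => projR (ξ i.succ) * rwM p).reverse.prod).mulVec _ = _
  rw [List.ofFn_succ' (f := fun i : Fin (n+1) => projR (ξ i.succ) * rwM p),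
    List.concat_eq_append, List.reverse_append, List.reverse_cons, List.reverse_nil,
    List.nil_append, List.singleton_append, List.prod_cons, ← Matrix.mulVec_mulVec,
    Fin.succ_last]
  congr 1

lemma key_exists (a b c d α β : ℂ) (p p₀ : ℝ)
    (ha : Complex.normSq a = p) (hbn : Complex.normSq b = 1 - p)
    (hcn : Complex.normSq c = 1 - p) (hdn : Complex.normSq d = p)
    (hq0 : Complex.normSq (a * α + b * β) = 1 - p₀)
    (hp0 : Complex.normSq (c * α + d * β) = p₀) :
    ∀ (n : ℕ) (ξ : Fin (n+1) → Bool), ∃ z : ℂ,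
      weight !![a,b;c,d] ![α,β] ξ = (fun i => if i = bidx (ξ (Fin.last n)) then z else 0) ∧
      rwVec p p₀ ξ = (fun i => if i = bidx (ξ (Fin.last n)) then Complex.normSq z else 0) := by
  have E : ∀ b' b₀ : Bool, rwM p (bidx b') (bidx b₀)
      = Complex.normSq (!![a,b;c,d] (bidx b') (bidx b₀)) := by
    intro b' b₀
    cases b' <;> cases b₀ <;>
      simp [rwM, bidx, ha, hbn, hcn, hdn]
  intro n
  induction n with
  | zero =>
    intro ξ
    refine ⟨(!![a,b;c,d].mulVec ![α,β]) (bidx (ξ 0)), ?_, ?_⟩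
    · rw [weight_one, pMat, projC_mul_mulVec]
      rfl
    · rw [rwVec_one, projR_mulVec]
      have : rwφ p₀ (bidx (ξ 0))
          = Complex.normSq ((!![a,b;c,d].mulVec ![α,β]) (bidx (ξ 0))) := by
        cases h : ξ 0 <;>
          simp [rwφ, bidx, Matrix.mulVec, dotProduct, Fin.sum_univ_two, hq0, hp0]
      rw [this]
      rfl
  | succ m IH =>
    intro ξ
    obtain ⟨z, hw, hr⟩ := IH (ξ ∘ Fin.castSucc)
    set b₀ := (ξ ∘ Fin.castSucc) (Fin.last m) with hb₀
    refine ⟨!![a,b;c,d] (bidx (ξ (Fin.last (m+1)))) (bidx b₀) * z, ?_, ?_⟩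
    · rw [weight_succ, pMat, projC_mul_mulVec, hw, mulVec_ind]
    · rw [rwVec_succ, projR_mul_mulVec, hr, mulVec_indR]
      funext i
      by_cases hi : i = bidx (ξ (Fin.last (m+1))) <;>
        simp [hi, E, Complex.normSq_mul]

/-- eigenvalues of the block `D_{A_P^{(n,j)}}` of the decoherence matrix indexed
by the paths (of length `n+1`) with endpoint `j`: they are `p_L^{(n+1)}(j)`, `p_R^{(n+1)}(j)`
and `0` with multiplicity `m − 2`, where `m = C(n+1, (n+1+j)/2) ≥ 2` is the number of such
paths. -/
theorem spec_decMat_AP_block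
    (a b c d α β : ℂ)
    (hU : !![a, b; c, d] ∈ Matrix.unitaryGroup (Fin 2) ℂ)
    (habcd : a * b * c * d ≠ 0)
    (hφ : ‖α‖ ^ 2 + ‖β‖ ^ 2 = 1)
    (p p₀ : ℝ)
    (hp : p = ‖a‖ ^ 2) (hp₀ : p₀ = ‖c * α + d * β‖ ^ 2)
    (n : ℕ) (j : ℤ) (hj : j.natAbs ≤ n + 1) (hpar : ((n : ℤ) + 1) % 2 = j % 2)
    (hcard : Fintype.card {ξ : Fin (n+1) → Bool // pathSum ξ = j} =
      Nat.choose (n + 1) ((((n : ℤ) + 1 + j) / 2).toNat))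
    (hcard2 : 2 ≤ Fintype.card {ξ : Fin (n+1) → Bool // pathSum ξ = j}) :
    (Matrix.charpoly (Matrix.of fun ξ η : {ξ : Fin (n+1) → Bool // pathSum ξ = j} =>
        if ξ.1 (Fin.last n) = η.1 (Fin.last n) then
          cdot (weight !![a, b; c, d] ![α, β] ξ.1) (weight !![a, b; c, d] ![α, β] η.1)
        else 0)).roots =
      {((pL p p₀ (n + 1) j : ℝ) : ℂ), ((pR p p₀ (n + 1) j : ℝ) : ℂ)} +
      Multiset.replicate (Fintype.card {ξ : Fin (n+1) → Bool // pathSum ξ = j} - 2) 0 := by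
  classical
  -- ### unitarity facts
  have h1 := Matrix.mem_unitaryGroup_iff.mp hU
  have h2 := Matrix.mem_unitaryGroup_iff'.mp hU
  have e1 : (!![a,b;c,d] * star !![a,b;c,d]) 0 0 = (1 : Matrix (Fin 2) (Fin 2) ℂ) 0 0 := by rw [h1]
  have e2 : (star !![a,b;c,d] * !![a,b;c,d]) 0 0 = (1 : Matrix (Fin 2) (Fin 2) ℂ) 0 0 := by rw [h2]
  have e3 : (!![a,b;c,d] * star !![a,b;c,d]) 1 1 = (1 : Matrix (Fin 2) (Fin 2) ℂ) 1 1 := by rw [h1]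
  have e4 : (star !![a,b;c,d] * !![a,b;c,d]) 0 1 = (1 : Matrix (Fin 2) (Fin 2) ℂ) 0 1 := by rw [h2]
  have e5 : (star !![a,b;c,d] * !![a,b;c,d]) 1 0 = (1 : Matrix (Fin 2) (Fin 2) ℂ) 1 0 := by rw [h2]
  have e6 : (star !![a,b;c,d] * !![a,b;c,d]) 1 1 = (1 : Matrix (Fin 2) (Fin 2) ℂ) 1 1 := by rw [h2]
  simp [Matrix.mul_apply, Fin.sum_univ_two, Matrix.star_apply, Matrix.one_apply]
    at e1 e2 e3 e4 e5 e6
  have ha : Complex.normSq a = p := by rw [hp, Complex.sq_norm]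
  have hp0 : Complex.normSq (c * α + d * β) = p₀ := by rw [hp₀, Complex.sq_norm]
  have hab : Complex.normSq a + Complex.normSq b = 1 := by
    have : ((Complex.normSq a : ℂ)) + (Complex.normSq b : ℂ) = 1 := by
      rw [← Complex.mul_conj, ← Complex.mul_conj]; linear_combination e1
    exact_mod_cast this
  have hac : Complex.normSq a + Complex.normSq c = 1 := by
    have : ((Complex.normSq a : ℂ)) + (Complex.normSq c : ℂ) = 1 := by
      rw [← Complex.mul_conj, ← Complex.mul_conj]; linear_combination e2
    exact_mod_cast this
  have hcd : Complex.normSq c + Complex.normSq d = 1 := by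
    have : ((Complex.normSq c : ℂ)) + (Complex.normSq d : ℂ) = 1 := by
      rw [← Complex.mul_conj, ← Complex.mul_conj]; linear_combination e3
    exact_mod_cast this
  have hφ' : Complex.normSq α + Complex.normSq β = 1 := by
    rw [← Complex.sq_norm, ← Complex.sq_norm]; exact hφ
  have hφC : α * (starRingEnd ℂ) α + β * (starRingEnd ℂ) β = 1 := by
    rw [Complex.mul_conj, Complex.mul_conj]; exact_mod_cast hφ'
  have hsum : Complex.normSq (a * α + b * β) + Complex.normSq (c * α + d * β) = 1 := by
    have : ((Complex.normSq (a * α + b * β) : ℂ))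
        + (Complex.normSq (c * α + d * β) : ℂ) = 1 := by
      rw [← Complex.mul_conj, ← Complex.mul_conj]
      simp only [map_add, _root_.map_mul]
      linear_combination (α * (starRingEnd ℂ) α) * e2 + (β * (starRingEnd ℂ) β) * e6 +
        ((starRingEnd ℂ) α * β) * e4 + (α * (starRingEnd ℂ) β) * e5 + hφC
    exact_mod_cast this
  -- ### the weight structure
  choose z hz1 hz2 using key_exists a b c d α β p p₀ ha (by linarith) (by linarith)
    (by linarith) (by linarith) hp0 n
  -- ### factorisation of the block matrix
  set A' : Matrix {ξ : Fin (n+1) → Bool // pathSum ξ = j} (Fin 2) ℂ :=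
    Matrix.of (fun ξ k => if bidx (ξ.1 (Fin.last n)) = k then (starRingEnd ℂ) (z ξ.1) else 0)
    with hA'
  set B' : Matrix (Fin 2) {ξ : Fin (n+1) → Bool // pathSum ξ = j} ℂ :=
    Matrix.of (fun k η => if bidx (η.1 (Fin.last n)) = k then z η.1 else 0) with hB'
  have hD : (Matrix.of fun ξ η : {ξ : Fin (n+1) → Bool // pathSum ξ = j} =>
        if ξ.1 (Fin.last n) = η.1 (Fin.last n) then
          cdot (weight !![a, b; c, d] ![α, β] ξ.1) (weight !![a, b; c, d] ![α, β] η.1)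
        else 0) = A' * B' := by
    ext ξ η
    rw [Matrix.of_apply, Matrix.mul_apply, Fin.sum_univ_two, hz1 ξ.1, hz1 η.1]
    simp only [hA', hB', Matrix.of_apply, cdot, Fin.sum_univ_two]
    cases hx : ξ.1 (Fin.last n) <;> cases hy : η.1 (Fin.last n) <;>
      simp [bidx, mul_comm]
  -- ### B' * A' is diagonal
  have hsub : ∀ f : (Fin (n+1) → Bool) → ℝ,
      (∑ ξ ∈ Finset.univ.filter (fun ξ : Fin (n+1) → Bool => pathSum ξ = j), f ξ)
        = ∑ ρ : {ξ : Fin (n+1) → Bool // pathSum ξ = j}, f ρ.1 := by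
    intro f
    exact Finset.sum_subtype _ (by simp) f
  have hBA : B' * A' = Matrix.diagonal
      ![((pL p p₀ (n + 1) j : ℝ) : ℂ), ((pR p p₀ (n + 1) j : ℝ) : ℂ)] := by
    ext k l
    rw [Matrix.mul_apply]
    fin_cases k <;> fin_cases l <;> simp only [Fin.zero_eta, Fin.mk_one]
    · rw [pL, hsub fun ξ => rwVec p p₀ ξ 0, Complex.ofReal_sum]
      simp only [Matrix.diagonal_apply_eq]
      rw [Matrix.cons_val_zero]
      refine Finset.sum_congr rfl fun ρ _ => ?_
      rw [hz2 ρ.1]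
      cases hb : ρ.1 (Fin.last n) <;>
        simp [hA', hB', hb, bidx, Complex.mul_conj]
    · refine (Finset.sum_eq_zero fun ρ _ => ?_).trans (by simp)
      cases hb : ρ.1 (Fin.last n) <;> simp [hA', hB', hb, bidx]
    · refine (Finset.sum_eq_zero fun ρ _ => ?_).trans (by simp)
      cases hb : ρ.1 (Fin.last n) <;> simp [hA', hB', hb, bidx]
    · rw [pR, hsub fun ξ => rwVec p p₀ ξ 1, Complex.ofReal_sum]
      simp only [Matrix.diagonal_apply_eq]
      rw [Matrix.cons_val_one]
      refine Finset.sum_congr rfl fun ρ _ => ?_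
      rw [hz2 ρ.1]
      cases hb : ρ.1 (Fin.last n) <;>
        simp [hA', hB', hb, bidx, Complex.mul_conj]
  -- ### the characteristic polynomial
  set m := Fintype.card {ξ : Fin (n+1) → Bool // pathSum ξ = j} with hm
  have hm2 : m - 2 + 2 = m := Nat.sub_add_cancel hcard2
  have hchar : (A' * B').charpoly =
      Polynomial.X ^ (m - 2) *
        ((Polynomial.X - Polynomial.C ((pL p p₀ (n + 1) j : ℝ) : ℂ)) *
         (Polynomial.X - Polynomial.C ((pR p p₀ (n + 1) j : ℝ) : ℂ))) := by
    apply Polynomial.eq_of_infinite_eval_eq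
    apply Set.Infinite.mono (s := {(0 : ℂ)}ᶜ)
    swap
    · exact (Set.finite_singleton 0).infinite_compl
    intro t ht
    have ht0 : t ≠ 0 := ht
    have heval : Polynomial.eval t (A' * B').charpoly
        = (t • (1 : Matrix {ξ : Fin (n+1) → Bool // pathSum ξ = j}
            {ξ : Fin (n+1) → Bool // pathSum ξ = j} ℂ) - A' * B').det := by
      rw [Matrix.charpoly]
      have := (RingHom.map_det (Polynomial.evalRingHom t) (Matrix.charmatrix (A' * B'))).symm
      rw [show Polynomial.eval t (Matrix.charmatrix (A' * B')).det
          = (Polynomial.evalRingHom t) (Matrix.charmatrix (A' * B')).det from rfl, ← this]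
      congr 1
      ext i k
      rw [RingHom.mapMatrix_apply, Matrix.map_apply]
      by_cases hik : i = k
      · subst hik
        simp [Matrix.charmatrix_apply_eq, Matrix.one_apply_eq]
      · simp [Matrix.charmatrix_apply_ne _ _ _ hik, Matrix.one_apply_ne hik]
    have hfac : t • (1 : Matrix {ξ : Fin (n+1) → Bool // pathSum ξ = j}
        {ξ : Fin (n+1) → Bool // pathSum ξ = j} ℂ) - A' * B'
        = t • ((1 : Matrix _ _ ℂ) - (t⁻¹ • A') * B') := by
      rw [Matrix.smul_mul, smul_sub, smul_smul, mul_inv_cancel₀ ht0, one_smul]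
    have hdiag : (1 : Matrix (Fin 2) (Fin 2) ℂ) - B' * (t⁻¹ • A')
        = Matrix.diagonal ![1 - t⁻¹ * ((pL p p₀ (n + 1) j : ℝ) : ℂ),
            1 - t⁻¹ * ((pR p p₀ (n + 1) j : ℝ) : ℂ)] := by
      rw [Matrix.mul_smul, hBA]
      ext k l
      fin_cases k <;> fin_cases l <;>
        simp [Matrix.diagonal, Matrix.one_apply]
    rw [Set.mem_setOf_eq, heval, hfac, Matrix.det_smul, Matrix.det_one_sub_mul_comm, hdiag,
      Matrix.det_diagonal, Fin.prod_univ_two, ← hm]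
    simp only [Polynomial.eval_mul, Polynomial.eval_pow, Polynomial.eval_sub,
      Polynomial.eval_X, Polynomial.eval_C, Matrix.cons_val_zero, Matrix.cons_val_one,
      Matrix.head_cons]
    rw [← hm2, pow_add]
    field_simp
    simp only [Nat.add_sub_cancel, Nat.add_sub_cancel_left]
    ring
  rw [hD, hchar, Polynomial.roots_mul, Polynomial.roots_mul, Polynomial.roots_pow,
    Polynomial.roots_X, Polynomial.roots_X_sub_C, Polynomial.roots_X_sub_C]
  · rw [Multiset.nsmul_singleton, add_comm]
    rfl
  · exact mul_ne_zero (Polynomial.X_sub_C_ne_zero _) (Polynomial.X_sub_C_ne_zero _)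
  · exact mul_ne_zero (pow_ne_zero _ Polynomial.X_ne_zero)
      (mul_ne_zero (Polynomial.X_sub_C_ne_zero _) (Polynomial.X_sub_C_ne_zero _))
end
end
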